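/- For every δ ∈ [0, 1/2], the function f(u) = h2(δ ⋆ h2⁻¹(u)) is convex on the interval [0, 1]. -/

import Mathlib

open MeasureTheory

/-- Binary entropy function (base 2), with the convention `0 * log₂ 0 = 0`
(automatic since `Real.logb 2 0 = 0`). -/
noncomputable def h2 (p : ℝ) : ℝ :=
  -(p * Real.logb 2 p) - (1 - p) * Real.logb 2 (1 - p)

/-- Inverse of the binary entropy function: for `q ≥ 0`, the unique `r ∈ [0, 1/2]`
with `h2 r = q` (realized as the infimum of the solution set); `0` for `q < 0`. -/
noncomputable def h2inv (q : ℝ) : ℝ :=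
  if q < 0 then 0 else sInf {r : ℝ | 0 ≤ r ∧ r ≤ 1 / 2 ∧ h2 r = q}

/-- Binary convolution `a ⋆ b = a(1-b) + (1-a)b`. -/
def bconv (a b : ℝ) : ℝ := a * (1 - b) + (1 - a) * b

open Real Set

namespace MrsGerber

lemma h2_eq (p : ℝ) : h2 p = Real.binEntropy p / Real.log 2 := by
  unfold h2 Real.binEntropy Real.logb
  rw [Real.log_inv, Real.log_inv]
  ring

lemma log2_pos : (0:ℝ) < Real.log 2 := Real.log_pos one_lt_two

lemma h2_zero : h2 0 = 0 := by simp [h2_eq]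

lemma h2_half : h2 (1/2) = 1 := by
  rw [h2_eq, show (1:ℝ)/2 = 2⁻¹ by norm_num, Real.binEntropy_two_inv,
    div_self log2_pos.ne']

lemma h2_fun_eq : h2 = fun p => Real.binEntropy p / Real.log 2 := funext h2_eq

lemma continuous_h2 : Continuous h2 := by
  rw [h2_fun_eq]; exact Real.binEntropy_continuous.div_const _

lemma h2_strictMonoOn : StrictMonoOn h2 (Icc (0:ℝ) (1/2)) := by
  intro x hx y hy hxy
  rw [h2_eq, h2_eq, div_lt_div_iff_of_pos_right log2_pos]
  have h : (1:ℝ)/2 = 2⁻¹ := by norm_num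
  exact Real.binEntropy_strictMonoOn (by rw [← h]; exact hx) (by rw [← h]; exact hy) hxy

lemma hasDerivAt_h2 {p : ℝ} (hp₀ : p ≠ 0) (hp₁ : p ≠ 1) :
    HasDerivAt h2 ((Real.log (1 - p) - Real.log p) / Real.log 2) p := by
  rw [h2_fun_eq]
  exact (Real.hasDerivAt_binEntropy hp₀ hp₁).div_const _

lemma h2_bijOn : BijOn h2 (Icc (0:ℝ) (1/2)) (Icc (0:ℝ) 1) := by
  refine ⟨fun p hp => ?_, h2_strictMonoOn.injOn, fun y hy => ?_⟩
  · constructor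
    · rw [← h2_zero]
      exact h2_strictMonoOn.monotoneOn (by norm_num) hp hp.1
    · rw [← h2_half]
      exact h2_strictMonoOn.monotoneOn hp (by norm_num) hp.2
  · have := intermediate_value_Icc (by norm_num : (0:ℝ) ≤ 1/2) continuous_h2.continuousOn
    rw [h2_zero, h2_half] at this
    exact this hy

/-- `h2` as an order isomorphism from `[0,1/2]` to `[0,1]`. -/
noncomputable def h2OrderIso : Icc (0:ℝ) (1/2) ≃o Icc (0:ℝ) 1 :=
  (h2_strictMonoOn.orderIso _ _).trans <| OrderIso.setCongr _ _ h2_bijOn.image_eq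

lemma coe_h2OrderIso_apply (x : Icc (0:ℝ) (1/2)) : (h2OrderIso x : ℝ) = h2 x := rfl

/-- A continuous global version of the inverse of `h2`. -/
noncomputable def h2i : ℝ → ℝ :=
  Subtype.val ∘ Set.IccExtend (by norm_num : (0:ℝ) ≤ 1) h2OrderIso.symm

lemma h2i_mem (u : ℝ) : h2i u ∈ Icc (0:ℝ) (1/2) := Subtype.coe_prop _

lemma continuous_h2i : Continuous h2i :=
  continuous_subtype_val.comp h2OrderIso.symm.continuous.Icc_extend'

lemma monotone_h2i : Monotone h2i :=
  (Subtype.mono_coe _).comp <| h2OrderIso.symm.monotone.IccExtend _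

lemma h2_h2i {u : ℝ} (hu : u ∈ Icc (0:ℝ) 1) : h2 (h2i u) = u := by
  have := Subtype.ext_iff.1 (h2OrderIso.apply_symm_apply ⟨u, hu⟩)
  rw [coe_h2OrderIso_apply] at this
  simpa [h2i, Set.IccExtend_of_mem _ _ hu] using this

lemma h2i_h2 {p : ℝ} (hp : p ∈ Icc (0:ℝ) (1/2)) : h2i (h2 p) = p := by
  have hmem : h2 p ∈ Icc (0:ℝ) 1 := h2_bijOn.mapsTo hp
  exact h2_strictMonoOn.injOn (h2i_mem _) hp (h2_h2i hmem)

lemma h2inv_eq {u : ℝ} (hu : u ∈ Icc (0:ℝ) 1) : h2inv u = h2i u := by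
  unfold h2inv
  rw [if_neg (not_lt.2 hu.1)]
  have hset : {r : ℝ | 0 ≤ r ∧ r ≤ 1 / 2 ∧ h2 r = u} = {h2i u} := by
    ext r
    simp only [mem_setOf_eq, mem_singleton_iff]
    constructor
    · rintro ⟨h1, h2r, h3⟩
      exact h2_strictMonoOn.injOn ⟨h1, h2r⟩ (h2i_mem u) (h3.trans (h2_h2i hu).symm)
    · rintro rfl
      exact ⟨(h2i_mem u).1, (h2i_mem u).2, h2_h2i hu⟩
  rw [hset, csInf_singleton]

lemma h2i_mem_Ioo {u : ℝ} (hu : u ∈ Ioo (0:ℝ) 1) : h2i u ∈ Ioo (0:ℝ) (1/2) := by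
  have hmem := h2i_mem u
  have hvu : h2 (h2i u) = u := h2_h2i (Ioo_subset_Icc_self hu)
  constructor
  · rcases eq_or_lt_of_le hmem.1 with h | h
    · exfalso; rw [← h, h2_zero] at hvu; exact hu.1.ne hvu
    · exact h
  · rcases eq_or_lt_of_le hmem.2 with h | h
    · exfalso; rw [h, h2_half] at hvu; exact hu.2.ne' hvu
    · exact h

/-- The "slope" function `L x = log(1-x) - log x`. -/
noncomputable def L (x : ℝ) : ℝ := Real.log (1 - x) - Real.log x

lemma hasDerivAt_L {x : ℝ} (hx0 : x ≠ 0) (hx1 : x ≠ 1) :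
    HasDerivAt L (-(1 - x)⁻¹ - x⁻¹) x := by
  have h1 : HasDerivAt (fun y : ℝ => Real.log (1 - y)) (-(1 - x)⁻¹) x := by
    have := ((hasDerivAt_id x).const_sub 1).log (sub_ne_zero.2 hx1.symm)
    have h' : HasDerivAt (fun y : ℝ => Real.log (1 - y)) (-1 / (1 - x)) x := this
    convert h' using 1
    ring
  exact h1.sub (Real.hasDerivAt_log hx0)

lemma L_pos {x : ℝ} (hx : x ∈ Ioo (0:ℝ) (1/2)) : 0 < L x :=
  sub_pos.2 (Real.log_lt_log hx.1 (by linarith [hx.2]))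

lemma L_nonneg {x : ℝ} (hx0 : 0 < x) (hx : x ≤ 1/2) : 0 ≤ L x :=
  sub_nonneg.2 (Real.log_le_log hx0 (by linarith))

/-- The auxiliary function for Mrs. Gerber's lemma. -/
noncomputable def G (x : ℝ) : ℝ := x * (1 - x) * L x

lemma continuous_G : Continuous G := by
  have hG : G = fun x => x * ((1 - x) * Real.log (1 - x)) - (1 - x) * (x * Real.log x) := by
    funext x; unfold G L; ring
  rw [hG]
  have h1 : Continuous fun x : ℝ => (1 - x) * Real.log (1 - x) :=
    Real.continuous_mul_log.comp (continuous_const.sub continuous_id)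
  exact (continuous_id.mul h1).sub
    ((continuous_const.sub continuous_id).mul Real.continuous_mul_log)

lemma hasDerivAt_G {x : ℝ} (hx : x ∈ Ioo (0:ℝ) (1/2)) :
    HasDerivAt G ((1 - 2*x) * L x - 1) x := by
  have hx0 : x ≠ 0 := hx.1.ne'
  have hx1 : x ≠ 1 := by have := hx.2; intro h; rw [h] at this; norm_num at this
  have h1 : HasDerivAt (fun y : ℝ => y * (1 - y)) (1 - 2*x) x := by
    have := (hasDerivAt_id' x).mul ((hasDerivAt_id' x).const_sub 1)
    have h' : HasDerivAt (fun y : ℝ => y * (1 - y)) (1 * (1 - x) + x * -1) x := this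
    convert h' using 1; ring
  have h2 := h1.mul (hasDerivAt_L hx0 hx1)
  have h2' : HasDerivAt G ((1 - 2 * x) * L x + x * (1 - x) * (-(1 - x)⁻¹ - x⁻¹)) x := h2
  convert h2' using 1
  have h1x : (1:ℝ) - x ≠ 0 := sub_ne_zero.2 hx1.symm
  field_simp
  ring

lemma G_half : G (1/2) = 0 := by unfold G L; norm_num

lemma concaveOn_G : ConcaveOn ℝ (Icc (0:ℝ) (1/2)) G := by
  apply AntitoneOn.concaveOn_of_deriv (convex_Icc _ _) continuous_G.continuousOn
  · rw [interior_Icc]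
    intro x hx
    exact (hasDerivAt_G hx).differentiableAt.differentiableWithinAt
  · rw [interior_Icc]
    intro x hx y hy hxy
    rw [(hasDerivAt_G hx).deriv, (hasDerivAt_G hy).deriv]
    have hLy : 0 ≤ L y := (L_pos hy).le
    have hLxy : L y ≤ L x := by
      unfold L
      have h1 : Real.log (1 - y) ≤ Real.log (1 - x) :=
        Real.log_le_log (by linarith [hy.2]) (by linarith)
      have h2 : Real.log x ≤ Real.log y := Real.log_le_log hx.1 hxy
      linarith
    have : (1 - 2*y) * L y ≤ (1 - 2*x) * L x :=
      mul_le_mul (by linarith) hLxy hLy (by linarith [hx.2])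
    linarith

/-- Core inequality (Mrs. Gerber): `(1-2δ) p(1-p)L(p) ≤ q(1-q)L(q)` for `q = δ ⋆ p`. -/
lemma core_ineq {δ p : ℝ} (hδ : δ ∈ Icc (0:ℝ) (1/2)) (hp : p ∈ Icc (0:ℝ) (1/2)) :
    (1 - 2*δ) * (p * (1 - p) * L p) ≤
      (δ + (1 - 2*δ)*p) * (1 - (δ + (1 - 2*δ)*p)) * L (δ + (1 - 2*δ)*p) := by
  have hhalf : (1:ℝ)/2 ∈ Icc (0:ℝ) (1/2) := by norm_num
  have ha : (0:ℝ) ≤ 1 - 2*δ := by linarith [hδ.2]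
  have hb : (0:ℝ) ≤ 2*δ := by linarith [hδ.1]
  have hab : (1 - 2*δ) + 2*δ = 1 := by ring
  have := concaveOn_G.2 hp hhalf ha hb hab
  rw [smul_eq_mul, smul_eq_mul, smul_eq_mul, smul_eq_mul, G_half, mul_zero, add_zero] at this
  have hq : (1 - 2*δ) * p + 2*δ * (1/2) = δ + (1 - 2*δ)*p := by ring
  rw [hq] at this
  unfold G at this
  exact this

variable {δ : ℝ}

/-- The derivative of the composed function, as a function of `p = h2inv u`. -/
noncomputable def φ (δ : ℝ) (x : ℝ) : ℝ := (1 - 2*δ) * (L (δ + (1 - 2*δ)*x) / L x)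

lemma q_mem {p : ℝ} (hδ : δ ∈ Icc (0:ℝ) (1/2)) (hp : p ∈ Ioo (0:ℝ) (1/2)) :
    0 < δ + (1 - 2*δ)*p ∧ δ + (1 - 2*δ)*p ≤ 1/2 := by
  constructor
  · rcases eq_or_lt_of_le hδ.1 with h | h
    · rw [← h]; simpa using hp.1
    · have : 0 ≤ (1 - 2*δ)*p := mul_nonneg (by linarith [hδ.2]) hp.1.le
      linarith
  · nlinarith [hδ.1, hδ.2, hp.1, hp.2]

lemma hasDerivAt_φ (hδ : δ ∈ Icc (0:ℝ) (1/2)) {p : ℝ} (hp : p ∈ Ioo (0:ℝ) (1/2)) :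
    HasDerivAt (φ δ) ((1 - 2*δ) * (((-(1 - (δ + (1 - 2*δ)*p))⁻¹ - (δ + (1 - 2*δ)*p)⁻¹) *
      (1 - 2*δ) * L p - L (δ + (1 - 2*δ)*p) * (-(1 - p)⁻¹ - p⁻¹)) / (L p)^2)) p := by
  set q := δ + (1 - 2*δ)*p with hq_def
  obtain ⟨hq0, hq2⟩ := q_mem hδ hp
  have hp0 : p ≠ 0 := hp.1.ne'
  have hp1 : p ≠ 1 := by intro h; rw [h] at hp; norm_num at hp
  have hq1 : q ≠ 1 := by intro h; rw [hq_def] at h; linarith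
  have hLp : L p ≠ 0 := (L_pos hp).ne'
  have hinner : HasDerivAt (fun x : ℝ => δ + (1 - 2*δ)*x) (1 - 2*δ) p := by
    simpa using ((hasDerivAt_id p).const_mul (1 - 2*δ)).const_add δ
  have hLq : HasDerivAt (fun x : ℝ => L (δ + (1 - 2*δ)*x))
      ((-(1 - q)⁻¹ - q⁻¹) * (1 - 2*δ)) p :=
    HasDerivAt.comp (h₂ := L) p (hasDerivAt_L hq0.ne' hq1) hinner
  have hdiv := hLq.div (hasDerivAt_L hp0 hp1) hLp
  exact hdiv.const_mul (1 - 2*δ)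

lemma deriv_φ_nonneg (hδ : δ ∈ Icc (0:ℝ) (1/2)) {p : ℝ} (hp : p ∈ Ioo (0:ℝ) (1/2)) :
    0 ≤ deriv (φ δ) p := by
  rw [(hasDerivAt_φ hδ hp).deriv]
  set q := δ + (1 - 2*δ)*p with hq_def
  obtain ⟨hq0, hq2⟩ := q_mem hδ hp
  have hq1 : (0:ℝ) < 1 - q := by linarith
  have hp1 : (0:ℝ) < 1 - p := by linarith [hp.2]
  have hA : (0:ℝ) < p * (1 - p) := mul_pos hp.1 hp1
  have hB : (0:ℝ) < q * (1 - q) := mul_pos hq0 hq1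
  have hq0' : q ≠ 0 := hq0.ne'
  have hq1' : (1:ℝ) - q ≠ 0 := hq1.ne'
  have hp0' : p ≠ 0 := hp.1.ne'
  have hp1' : (1:ℝ) - p ≠ 0 := hp1.ne'
  have e1 : -(1 - q)⁻¹ - q⁻¹ = -(1 / (q * (1 - q))) := by field_simp; ring
  have e2 : -(1 - p)⁻¹ - p⁻¹ = -(1 / (p * (1 - p))) := by field_simp; ring
  rw [e1, e2]
  have hcore := core_ineq hδ (Ioo_subset_Icc_self hp)
  rw [← hq_def] at hcore
  have hnum : 0 ≤ -(1 / (q * (1 - q))) * (1 - 2*δ) * L p - L q * -(1 / (p * (1 - p))) := by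
    have key : (1 - 2*δ) * (p * (1 - p) * L p) ≤ q * (1 - q) * L q := hcore
    have expand : -(1 / (q * (1 - q))) * (1 - 2*δ) * L p - L q * -(1 / (p * (1 - p)))
        = (q * (1 - q) * L q - (1 - 2*δ) * (p * (1 - p) * L p)) / (q * (1 - q) * (p * (1 - p))) := by
      field_simp
      ring
    rw [expand]
    exact div_nonneg (by linarith) (mul_pos hB hA).le
  exact mul_nonneg (by linarith [hδ.2]) (div_nonneg hnum (sq_nonneg _))

lemma monotoneOn_φ (hδ : δ ∈ Icc (0:ℝ) (1/2)) : MonotoneOn (φ δ) (Ioo (0:ℝ) (1/2)) := by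
  apply monotoneOn_of_deriv_nonneg (convex_Ioo _ _)
  · intro x hx
    exact ((hasDerivAt_φ hδ hx).differentiableAt).continuousAt.continuousWithinAt
  · rw [isOpen_Ioo.interior_eq]
    intro x hx
    exact (hasDerivAt_φ hδ hx).differentiableAt.differentiableWithinAt
  · rw [isOpen_Ioo.interior_eq]
    intro x hx
    exact deriv_φ_nonneg hδ hx

lemma bconv_eq (a b : ℝ) : bconv a b = a + (1 - 2*a) * b := by unfold bconv; ring

lemma hasDerivAt_f (hδ : δ ∈ Icc (0:ℝ) (1/2)) {u : ℝ} (hu : u ∈ Ioo (0:ℝ) 1) :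
    HasDerivAt (fun u => h2 (bconv δ (h2i u))) (φ δ (h2i u)) u := by
  set p := h2i u with hp_def
  have hp : p ∈ Ioo (0:ℝ) (1/2) := h2i_mem_Ioo hu
  obtain ⟨hq0, hq2⟩ := q_mem hδ hp
  set q := δ + (1 - 2*δ)*p with hq_def
  have hp0 : p ≠ 0 := hp.1.ne'
  have hp1 : p ≠ 1 := by intro h; rw [h] at hp; norm_num at hp
  have hq1 : q ≠ 1 := by intro h; rw [hq_def] at h; linarith
  have hLp : (0:ℝ) < L p := L_pos hp
  have hDp : (Real.log (1 - p) - Real.log p) / Real.log 2 ≠ 0 := by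
    apply div_ne_zero _ log2_pos.ne'
    exact hLp.ne'
  -- derivative of h2i
  have hinv : HasDerivAt h2i (((Real.log (1 - p) - Real.log p) / Real.log 2)⁻¹) u := by
    apply HasDerivAt.of_local_left_inverse continuous_h2i.continuousAt
      (hasDerivAt_h2 hp0 hp1) hDp
    filter_upwards [isOpen_Ioo.mem_nhds hu] with y hy
    exact h2_h2i (Ioo_subset_Icc_self hy)
  -- derivative of inner affine composition
  have hinner : HasDerivAt (fun u => δ + (1 - 2*δ) * h2i u)
      ((1 - 2*δ) * ((Real.log (1 - p) - Real.log p) / Real.log 2)⁻¹) u :=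
    (hinv.const_mul (1 - 2*δ)).const_add δ
  have houter : HasDerivAt h2 ((Real.log (1 - q) - Real.log q) / Real.log 2) q :=
    hasDerivAt_h2 hq0.ne' hq1
  have hcomp := houter.comp u hinner
  have heq : (fun u => h2 (bconv δ (h2i u))) = fun u => h2 (δ + (1 - 2*δ) * h2i u) := by
    funext v; rw [bconv_eq]
  rw [heq]
  have hcomp' : HasDerivAt (fun u => h2 (δ + (1 - 2*δ) * h2i u))
      ((Real.log (1 - q) - Real.log q) / Real.log 2 *
        ((1 - 2*δ) * ((Real.log (1 - p) - Real.log p) / Real.log 2)⁻¹)) u := hcomp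
  convert hcomp' using 1
  unfold φ L
  rw [← hq_def]
  have hl2 : Real.log 2 ≠ 0 := log2_pos.ne'
  have hLp' : Real.log (1 - p) - Real.log p ≠ 0 := hLp.ne'
  field_simp

lemma convexOn_congr {s : Set ℝ} {f g : ℝ → ℝ} (hf : ConvexOn ℝ s f) (h : Set.EqOn f g s) :
    ConvexOn ℝ s g := by
  refine ⟨hf.1, fun x hx y hy a b ha hb hab => ?_⟩
  rw [← h hx, ← h hy, ← h (hf.1 hx hy ha hb hab)]
  exact hf.2 hx hy ha hb hab

lemma convexOn_aux (hδ : δ ∈ Icc (0:ℝ) (1/2)) :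
    ConvexOn ℝ (Icc (0:ℝ) 1) (fun u => h2 (bconv δ (h2i u))) := by
  apply MonotoneOn.convexOn_of_deriv (convex_Icc _ _)
  · apply Continuous.continuousOn
    have : Continuous fun u => bconv δ (h2i u) := by
      simp only [bconv_eq]
      exact continuous_const.add (continuous_const.mul continuous_h2i)
    exact continuous_h2.comp this
  · rw [interior_Icc]
    intro u hu
    exact (hasDerivAt_f hδ hu).differentiableAt.differentiableWithinAt
  · rw [interior_Icc]
    intro u hu v hv huv
    rw [(hasDerivAt_f hδ hu).deriv, (hasDerivAt_f hδ hv).deriv]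
    exact monotoneOn_φ hδ (h2i_mem_Ioo hu) (h2i_mem_Ioo hv) (monotone_h2i huv)

end MrsGerber

/-- For every `δ ∈ [0, 1/2]`, the function `f(u) = h2(δ ⋆ h2⁻¹(u))` is convex on `[0, 1]`. -/
theorem stmt0 (δ : ℝ) (hδ : δ ∈ Set.Icc (0 : ℝ) (1 / 2)) :
    ConvexOn ℝ (Set.Icc (0 : ℝ) 1) (fun u => h2 (bconv δ (h2inv u))) := by
  apply MrsGerber.convexOn_congr (MrsGerber.convexOn_aux hδ)
  intro u hu
  simp only
  rw [MrsGerber.h2inv_eq hu]
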